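/- Let H and Θ be the Jacobi theta functions with modulus k, satisfying H(z+2K) = -H(z), H(-z) = -H(z), Θ(z+2K) = Θ(z), Θ(-z) = Θ(z), H(z+iK') = i·e^{-iπ(2z+iK')/(4K)}Θ(z), Θ(z+iK') = i·e^{-iπ(2z+iK')/(4K)}H(z), and the Weierstrass three-term identity H(x+y)H(x-y)H(z+w)H(z-w) + H(x+z)H(x-z)H(w+y)H(w-y) + H(x+w)H(x-w)H(y+z)H(y-z) = 0. Then for all a, b, c: Θ(c+a)Θ(c-b)H(c-a+b) - Θ(c-a)Θ(c+b)H(c+a-b) = H(2c)H(b-a)Θ(a)Θ(b)/H(c), provided H(c) ≠ 0. -/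

import Mathlib

open Complex in
/-- Derived theta-function identity (ti1) from the three-term identity and
quasi-periodicity. -/
theorem stmt_13 (H Θ : ℂ → ℂ) (K K' : ℂ)
    (hH2K : ∀ z, H (z + 2 * K) = - H z)
    (hHodd : ∀ z, H (-z) = - H z)
    (hΘ2K : ∀ z, Θ (z + 2 * K) = Θ z)
    (hΘeven : ∀ z, Θ (-z) = Θ z)
    (hHiK : ∀ z, H (z + I * K')
      = I * Complex.exp (-(I * Real.pi) * (2 * z + I * K') / (4 * K)) * Θ z)
    (hΘiK : ∀ z, Θ (z + I * K')
      = I * Complex.exp (-(I * Real.pi) * (2 * z + I * K') / (4 * K)) * H z)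
    (h3 : ∀ x y z w : ℂ,
      H (x + y) * H (x - y) * H (z + w) * H (z - w)
      + H (x + z) * H (x - z) * H (w + y) * H (w - y)
      + H (x + w) * H (x - w) * H (y + z) * H (y - z) = 0) :
    ∀ a b c : ℂ, H c ≠ 0 →
      Θ (c + a) * Θ (c - b) * H (c - a + b) - Θ (c - a) * Θ (c + b) * H (c + a - b)
        = H (2 * c) * H (b - a) * Θ a * Θ b / H c := by
  intro a b c hc
  have key := h3 (c + (a-b)/2) ((a+b)/2 + I*K') (c + (b-a)/2) ((b-a)/2)
  rw [show c + (a-b)/2 + ((a+b)/2 + I*K') = (c+a) + I*K' by ring] at key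
  rw [show c + (a-b)/2 - ((a+b)/2 + I*K') = -(-(c-b) + I*K') by ring] at key
  rw [show c + (b-a)/2 + (b-a)/2 = c - a + b by ring] at key
  rw [show c + (b-a)/2 - (b-a)/2 = c by ring] at key
  rw [show c + (a-b)/2 + (c + (b-a)/2) = 2*c by ring] at key
  rw [show c + (a-b)/2 - (c + (b-a)/2) = -(b-a) by ring] at key
  rw [show (b-a)/2 + ((a+b)/2 + I*K') = b + I*K' by ring] at key
  rw [show (b-a)/2 - ((a+b)/2 + I*K') = -(a + I*K') by ring] at key
  rw [show c + (a-b)/2 + (b-a)/2 = c by ring] at key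
  rw [show c + (a-b)/2 - (b-a)/2 = c + a - b by ring] at key
  rw [show (a+b)/2 + I*K' + (c + (b-a)/2) = (c+b) + I*K' by ring] at key
  rw [show (a+b)/2 + I*K' - (c + (b-a)/2) = -(c-a) + I*K' by ring] at key
  simp only [hHodd, hHiK, hΘeven] at key
  set C := Complex.exp (-(I * Real.pi) * (2*(a+b) + 2*(I*K')) / (4 * K)) with hCdef
  have hCne : C ≠ 0 := Complex.exp_ne_zero _
  have mul_lem : ∀ u v : ℂ, u + v = a + b →
      Complex.exp (-(I * Real.pi) * (2 * u + I * K') / (4 * K))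
        * Complex.exp (-(I * Real.pi) * (2 * v + I * K') / (4 * K)) = C := by
    intro u v huv
    rw [hCdef, ← Complex.exp_add]
    congr 1
    rw [← add_div]
    congr 1
    linear_combination (-(2*I*(Real.pi:ℂ))) * huv
  have m1 := mul_lem (c+a) (-(c-b)) (by ring)
  have m2 := mul_lem b a (by ring)
  have m3 := mul_lem (c+b) (-(c-a)) (by ring)
  have key2 : (Θ (c + a) * Θ (c - b) * H (c - a + b) * H c
      - H (2 * c) * H (b - a) * Θ a * Θ b
      - Θ (c - a) * Θ (c + b) * H (c + a - b) * H c) * C = 0 := by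
    set A := Θ (c + a) * Θ (c - b) * H (c - a + b) * H c with hA
    set B := H (2 * c) * H (b - a) * Θ a * Θ b with hB
    set D := Θ (c - a) * Θ (c + b) * H (c + a - b) * H c with hD
    set P1 := Complex.exp (-(I * Real.pi) * (2 * (c+a) + I * K') / (4 * K))
      * Complex.exp (-(I * Real.pi) * (2 * -(c-b) + I * K') / (4 * K)) with hP1
    set P2 := Complex.exp (-(I * Real.pi) * (2 * b + I * K') / (4 * K))
      * Complex.exp (-(I * Real.pi) * (2 * a + I * K') / (4 * K)) with hP2
    set P3 := Complex.exp (-(I * Real.pi) * (2 * (c+b) + I * K') / (4 * K))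
      * Complex.exp (-(I * Real.pi) * (2 * -(c-a) + I * K') / (4 * K)) with hP3
    linear_combination key + (-A)*m1 + B*m2 + D*m3 + (A*P1 - B*P2 - D*P3)*Complex.I_sq
  have key3 := (mul_eq_zero.mp key2).resolve_right hCne
  rw [eq_div_iff hc]
  linear_combination key3
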